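/- Under the standing assumptions, fix q ∈ (2ρ, 1), a starting vector z⁰ ∈ ℝ^s, and assume C ≠ 0 and δ > 0. There do NOT exist infinite sequences (z^n)_{n≥0}, (r^n)_{n≥0}, (α_n)_{n≥0} such that for every n ≥ 0: r^n = g^δ − K·S_μ(z^n), ‖r^n‖ > τδ, α_n > 0 with α_n‖(CCᵀ + α_n I)⁻¹ r^n‖ = q_n‖r^n‖ where τ_n = ‖r^n‖/δ and q_n = max{q, 2ρ + (1+ρ)/τ_n}, and z^{n+1} = z^n + WCᵀ(CCᵀ + α_n I)⁻¹ r^n. Equivalently, every run of the iteration reaches a finite stopping index n_δ with ‖r^{n_δ}‖ ≤ τδ. -/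

import Mathlib

open Matrix Filter

/-- Soft-thresholding operator acting componentwise:
`S_μ(u)_i = sgn(u_i) · max(|u_i| − μ, 0)`. -/
noncomputable def soft {s : ℕ} (μ : ℝ) (u : EuclideanSpace ℝ (Fin s)) : EuclideanSpace ℝ (Fin s) :=
  WithLp.toLp 2 (fun i => Real.sign (u i) * max (|u i| - μ) 0)

/-- Matrix-vector multiplication as a map between Euclidean spaces. -/
noncomputable def mulVecE {m n : ℕ} (A : Matrix (Fin m) (Fin n) ℝ)
    (v : EuclideanSpace ℝ (Fin n)) : EuclideanSpace ℝ (Fin m) :=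
  WithLp.toLp 2 (A.mulVec v)

/-- The spectral norm of a real matrix: the operator norm induced by Euclidean vector norms. -/
noncomputable def specNorm {m n : ℕ} (A : Matrix (Fin m) (Fin n) ℝ) : ℝ :=
  ‖(Matrix.toEuclideanLin A).toContinuousLinearMap‖

/-- The ℓ¹-norm of a vector. -/
noncomputable def l1norm {s : ℕ} (u : EuclideanSpace ℝ (Fin s)) : ℝ := ∑ i, |u i|

lemma mulVecE_mul {m n p : ℕ} (A : Matrix (Fin m) (Fin n) ℝ) (B : Matrix (Fin n) (Fin p) ℝ)
    (v : EuclideanSpace ℝ (Fin p)) : mulVecE (A * B) v = mulVecE A (mulVecE B v) :=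
  congrArg (WithLp.toLp 2) (Matrix.mulVec_mulVec v A B).symm

lemma mulVecE_sub {m n : ℕ} (A : Matrix (Fin m) (Fin n) ℝ) (u v : EuclideanSpace ℝ (Fin n)) :
    mulVecE A (u - v) = mulVecE A u - mulVecE A v :=
  congrArg (WithLp.toLp 2) (Matrix.mulVec_sub A u v)

lemma mulVecE_add {m n : ℕ} (A : Matrix (Fin m) (Fin n) ℝ) (u v : EuclideanSpace ℝ (Fin n)) :
    mulVecE A (u + v) = mulVecE A u + mulVecE A v :=
  congrArg (WithLp.toLp 2) (Matrix.mulVec_add A u v)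

lemma inner_mulVecE {m n : ℕ} (A : Matrix (Fin m) (Fin n) ℝ) (u : EuclideanSpace ℝ (Fin n))
    (v : EuclideanSpace ℝ (Fin m)) :
    (inner ℝ (mulVecE A u) v : ℝ) = inner ℝ u (mulVecE Aᵀ v) := by
  simp only [PiLp.inner_apply, RCLike.inner_apply, conj_trivial, mulVecE]
  calc ∑ i, v i * (A *ᵥ u) i = (A *ᵥ u) ⬝ᵥ v := dotProduct_comm _ _
    _ = v ⬝ᵥ (A *ᵥ u) := dotProduct_comm _ _
    _ = (v ᵥ* A) ⬝ᵥ u := dotProduct_mulVec v A u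
    _ = u ⬝ᵥ (Aᵀ *ᵥ v) := by rw [Matrix.mulVec_transpose, dotProduct_comm]
    _ = ∑ i, (Aᵀ *ᵥ v) i * u i := dotProduct_comm _ _

lemma norm_mulVecE_le {m n : ℕ} (A : Matrix (Fin m) (Fin n) ℝ) (v : EuclideanSpace ℝ (Fin n)) :
    ‖mulVecE A v‖ ≤ specNorm A * ‖v‖ := by
  have h := (Matrix.toEuclideanLin A).toContinuousLinearMap.le_opNorm v
  have he : (Matrix.toEuclideanLin A).toContinuousLinearMap v = mulVecE A v := by
    simp [mulVecE, Matrix.toEuclideanLin_apply]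
  rwa [he] at h

lemma norm_mulVecE_isometry {N s : ℕ} (W : Matrix (Fin s) (Fin N) ℝ)
    (hW : Wᵀ * W = (1 : Matrix (Fin N) (Fin N) ℝ)) (v : EuclideanSpace ℝ (Fin N)) :
    ‖mulVecE W v‖ = ‖v‖ := by
  have h : ‖mulVecE W v‖ ^ 2 = ‖v‖ ^ 2 := by
    rw [← real_inner_self_eq_norm_sq, ← real_inner_self_eq_norm_sq]
    calc (inner ℝ (mulVecE W v) (mulVecE W v) : ℝ)
        = inner ℝ v (mulVecE Wᵀ (mulVecE W v)) := inner_mulVecE W v _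
      _ = inner ℝ v v := by
          rw [show mulVecE Wᵀ (mulVecE W v) = v by
            show WithLp.toLp 2 (Wᵀ *ᵥ (W *ᵥ v.ofLp)) = v
            rw [Matrix.mulVec_mulVec, hW, Matrix.one_mulVec]]
  have h2 := congrArg Real.sqrt h
  rwa [Real.sqrt_sq (norm_nonneg _), Real.sqrt_sq (norm_nonneg _)] at h2

lemma posDef_CCt_add {n : ℕ} (α : ℝ) (hα : 0 < α) (C : Matrix (Fin n) (Fin n) ℝ) :
    (C * Cᵀ + α • (1 : Matrix (Fin n) (Fin n) ℝ)).PosDef := by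
  have h1 : (C * Cᵀ).PosSemidef := by
    have := Matrix.posSemidef_conjTranspose_mul_self Cᵀ
    rwa [Matrix.conjTranspose_eq_transpose_of_trivial, Matrix.transpose_transpose] at this
  have h2 : (α • (1 : Matrix (Fin n) (Fin n) ℝ)).PosDef := by
    rw [Matrix.smul_one_eq_diagonal]
    exact Matrix.PosDef.diagonal fun _ => hα
  exact Matrix.PosDef.posSemidef_add h1 h2

set_option maxHeartbeats 2000000 in
/-- Finite termination of Algorithm 4--NS: there is no infinite run of the nonstationary
preconditioned iteration along which the discrepancy principle is never satisfied
(i.e. with `‖r^n‖ > τδ` for every `n`). -/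
theorem stmt14 {N s : ℕ} (hN : 0 < N) (hs : 0 < s) (hNs : N ≤ s)
    (A C : Matrix (Fin N) (Fin N) ℝ) (hC : C ≠ 0) (W : Matrix (Fin s) (Fin N) ℝ)
    (hW : Wᵀ * W = (1 : Matrix (Fin N) (Fin N) ℝ))
    (ρ μ δ : ℝ) (hρ0 : 0 < ρ) (hρ1 : ρ < 1 / 2) (hμ : 0 ≤ μ) (hδ : 0 < δ)
    (hi : ∀ v : EuclideanSpace ℝ (Fin N), ‖mulVecE (C - A) v‖ ≤ ρ * ‖mulVecE A v‖)
    (hii : ∀ u : EuclideanSpace ℝ (Fin s), ‖mulVecE (C * Wᵀ) (u - soft μ u)‖ ≤ ρ * δ)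
    (x : EuclideanSpace ℝ (Fin s)) (gδ : EuclideanSpace ℝ (Fin N))
    (hgδ : ‖gδ - mulVecE (A * Wᵀ) x‖ ≤ δ)
    (q : ℝ) (hq0 : 2 * ρ < q) (hq1 : q < 1)
    (z0 : EuclideanSpace ℝ (Fin s)) :
    ¬ ∃ (z : ℕ → EuclideanSpace ℝ (Fin s)) (r : ℕ → EuclideanSpace ℝ (Fin N)) (αs : ℕ → ℝ),
      z 0 = z0 ∧
      ∀ n : ℕ,
        r n = gδ - mulVecE (A * Wᵀ) (soft μ (z n)) ∧
        ‖r n‖ > ((1 + 2 * ρ) / (1 - 2 * ρ)) * δ ∧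
        0 < αs n ∧
        αs n * ‖mulVecE (C * Cᵀ + αs n • (1 : Matrix (Fin N) (Fin N) ℝ))⁻¹ (r n)‖ =
          max q (2 * ρ + (1 + ρ) / (‖r n‖ / δ)) * ‖r n‖ ∧
        z (n + 1) =
          z n + mulVecE (W * Cᵀ * (C * Cᵀ + αs n • (1 : Matrix (Fin N) (Fin N) ℝ))⁻¹) (r n) := by
  rintro ⟨z, r, αs, hz0, hrec⟩
  -- basic constants
  set τ : ℝ := (1 + 2 * ρ) / (1 - 2 * ρ) with hτdef
  have h2ρ : (0:ℝ) < 1 - 2 * ρ := by linarith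
  have hτ1 : 1 < τ := (one_lt_div h2ρ).mpr (by linarith)
  have hτpos : 0 < τ := by linarith
  set qb : ℝ := max q (2 * ρ + (1 + ρ) / τ) with hqbdef
  have hqb1 : qb < 1 := by
    apply max_lt hq1
    have hτval : τ * (1 - 2 * ρ) = 1 + 2 * ρ := by
      rw [hτdef]; field_simp
    have h1 : (1 + ρ) / τ * τ = 1 + ρ := div_mul_cancel₀ _ (ne_of_gt hτpos)
    nlinarith [hτpos]
  have hqqb : q ≤ qb := le_max_left _ _
  have hqbpos : 0 < qb := lt_of_lt_of_le (by linarith) hqqb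
  set B : ℝ := specNorm (C * Cᵀ) + 1 with hBdef
  have hBpos : 0 < B := by
    have : (0:ℝ) ≤ specNorm (C * Cᵀ) := norm_nonneg _
    linarith
  set c : ℝ := (1 - qb) * (τ * δ) / B with hcdef
  have hcpos : 0 < c := by
    apply div_pos _ hBpos
    apply mul_pos (by linarith) (by positivity)
  set ε : ℝ := 2 * c * (ρ * ((τ - 1) * δ)) with hεdef
  have hεpos : 0 < ε := by
    apply mul_pos (by linarith)
    exact mul_pos hρ0 (mul_pos (by linarith) hδ)
  -- the key one-step decrease
  have step : ∀ n, ‖x - z (n + 1)‖ ^ 2 ≤ ‖x - z n‖ ^ 2 - ε := by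
    intro n
    obtain ⟨hr, hrn, hα, hαeq, hznext⟩ := hrec n
    have hR0 : 0 < ‖r n‖ := lt_trans (by positivity) hrn
    set α := αs n with hαdef
    set M := C * Cᵀ + α • (1 : Matrix (Fin N) (Fin N) ℝ) with hMdef
    have hMpd : M.PosDef := posDef_CCt_add α hα C
    set h : EuclideanSpace ℝ (Fin N) := mulVecE M⁻¹ (r n) with hhdef
    set qn : ℝ := max q (2 * ρ + (1 + ρ) / (‖r n‖ / δ)) with hqndef
    have hαeq' : α * ‖h‖ = qn * ‖r n‖ := hαeq
    have hMh : mulVecE M h = r n := by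
      show WithLp.toLp 2 (M *ᵥ (M⁻¹ *ᵥ (r n).ofLp)) = r n
      rw [Matrix.mulVec_mulVec,
        Matrix.mul_nonsing_inv M ((Matrix.isUnit_iff_isUnit_det M).mp hMpd.isUnit),
        Matrix.one_mulVec]
    have hMh' : mulVecE (C * Cᵀ) h + α • h = r n := by
      rw [← hMh, hMdef]
      ext i
      show ((C * Cᵀ) *ᵥ h) i + α * h i
          = ((C * Cᵀ + α • (1 : Matrix (Fin N) (Fin N) ℝ)) *ᵥ h) i
      rw [Matrix.add_mulVec, Matrix.smul_mulVec, Matrix.one_mulVec]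
      rfl
    -- the update direction
    set w : EuclideanSpace ℝ (Fin N) := mulVecE Cᵀ h with hwdef
    set u : EuclideanSpace ℝ (Fin s) := mulVecE W w with hudef
    have hu : mulVecE (W * Cᵀ * M⁻¹) (r n) = u := by
      rw [mulVecE_mul (W * Cᵀ) M⁻¹, mulVecE_mul W Cᵀ]
    have he' : x - z (n + 1) = (x - z n) - u := by
      rw [hznext, hu]; abel
    have hexp : ‖x - z (n + 1)‖ ^ 2 = ‖x - z n‖ ^ 2 - 2 * inner ℝ (x - z n) u + ‖u‖ ^ 2 := by
      rw [he']; exact norm_sub_sq_real _ _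
    have hun : ‖u‖ = ‖w‖ := norm_mulVecE_isometry W hW w
    -- ‖w‖² = ⟪r,h⟫ − α‖h‖²
    have hw2 : ‖w‖ ^ 2 = inner ℝ (r n) h - α * ‖h‖ ^ 2 := by
      have h1 : (inner ℝ w w : ℝ) = inner ℝ h (mulVecE C w) := by
        rw [hwdef, inner_mulVecE Cᵀ h w, Matrix.transpose_transpose]
      have h2 : mulVecE C w = r n - α • h := by
        rw [hwdef, ← mulVecE_mul, ← hMh', add_sub_cancel_right]
      rw [← real_inner_self_eq_norm_sq, h1, h2, inner_sub_right, real_inner_smul_right,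
        real_inner_self_eq_norm_sq, real_inner_comm]
    have hrh_ge : α * ‖h‖ ^ 2 ≤ inner ℝ (r n) h := by
      linarith [hw2, sq_nonneg ‖w‖]
    -- rewrite the cross term
    have hiu : (inner ℝ (x - z n) u : ℝ) = inner ℝ (mulVecE (C * Wᵀ) (x - z n)) h := by
      calc (inner ℝ (x - z n) u : ℝ) = inner ℝ (mulVecE W w) (x - z n) := real_inner_comm _ _
        _ = inner ℝ w (mulVecE Wᵀ (x - z n)) := inner_mulVecE W w _
        _ = inner ℝ h (mulVecE C (mulVecE Wᵀ (x - z n))) := by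
            rw [hwdef, inner_mulVecE Cᵀ h _, Matrix.transpose_transpose]
        _ = inner ℝ h (mulVecE (C * Wᵀ) (x - z n)) := by rw [mulVecE_mul]
        _ = _ := real_inner_comm _ _
    -- decomposition of C Wᵀ (x − z n)
    set S : EuclideanSpace ℝ (Fin s) := soft μ (z n) with hSdef
    set d : EuclideanSpace ℝ (Fin N) := gδ - mulVecE (A * Wᵀ) x with hddef
    have hd : ‖d‖ ≤ δ := hgδ
    have ha1 : mulVecE (A * Wᵀ) (x - S) = r n - d := by
      rw [mulVecE_sub, hr, hddef]; abel
    set a2 : EuclideanSpace ℝ (Fin N) := mulVecE ((C - A) * Wᵀ) (x - S) with ha2def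
    have ha2norm : ‖a2‖ ≤ ρ * (‖r n‖ + δ) := by
      have h1 : ‖a2‖ ≤ ρ * ‖mulVecE A (mulVecE Wᵀ (x - S))‖ := by
        rw [ha2def, mulVecE_mul]; exact hi _
      have h2 : mulVecE A (mulVecE Wᵀ (x - S)) = r n - d := by
        rw [← mulVecE_mul, ha1]
      rw [h2] at h1
      have h3 : ‖r n - d‖ ≤ ‖r n‖ + δ := le_trans (norm_sub_le _ _) (by linarith)
      calc ‖a2‖ ≤ ρ * ‖r n - d‖ := h1
        _ ≤ ρ * (‖r n‖ + δ) := mul_le_mul_of_nonneg_left h3 (le_of_lt hρ0)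
    set v3 : EuclideanSpace ℝ (Fin N) := mulVecE (C * Wᵀ) (z n - S) with hv3def
    have hv3 : ‖v3‖ ≤ ρ * δ := hii (z n)
    have hdecomp : mulVecE (C * Wᵀ) (x - z n) = (r n - d) + a2 - v3 := by
      have hsplit : x - z n = (x - S) - (z n - S) := by abel
      have hCW : A * Wᵀ + (C - A) * Wᵀ = C * Wᵀ := by
        rw [Matrix.sub_mul]; abel
      have hkey : mulVecE (C * Wᵀ) (x - S) = (r n - d) + a2 := by
        have e : mulVecE (A * Wᵀ + (C - A) * Wᵀ) (x - S)
            = mulVecE (A * Wᵀ) (x - S) + mulVecE ((C - A) * Wᵀ) (x - S) :=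
          congrArg (WithLp.toLp 2) (Matrix.add_mulVec _ _ _)
        rw [hCW] at e
        rw [e, ha1, ← ha2def]
      rw [hsplit, mulVecE_sub, hkey, ← hv3def]
    clear_value S d a2 v3 w u h M qn α
    -- lower bound on the cross term
    have hcross : (inner ℝ (x - z n) u : ℝ) ≥
        inner ℝ (r n) h - (δ + ρ * (‖r n‖ + δ) + ρ * δ) * ‖h‖ := by
      rw [hiu, hdecomp]
      rw [inner_sub_left, inner_add_left, inner_sub_left]
      have b1 := abs_real_inner_le_norm d h
      have b2 := abs_real_inner_le_norm a2 h
      have b3 := abs_real_inner_le_norm v3 h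
      have hh0 : (0:ℝ) ≤ ‖h‖ := norm_nonneg h
      have c1 : ‖d‖ * ‖h‖ ≤ δ * ‖h‖ := mul_le_mul_of_nonneg_right hd hh0
      have c2 : ‖a2‖ * ‖h‖ ≤ ρ * (‖r n‖ + δ) * ‖h‖ := mul_le_mul_of_nonneg_right ha2norm hh0
      have c3 : ‖v3‖ * ‖h‖ ≤ ρ * δ * ‖h‖ := mul_le_mul_of_nonneg_right hv3 hh0
      have f1 := abs_le.mp (le_trans b1 c1)
      have f2 := abs_le.mp (le_trans b2 c2)
      have f3 := abs_le.mp (le_trans b3 c3)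
      linarith [f1.2, f2.1, f3.2]
    -- key scalar facts
    have hqn_ge : 2 * ρ * ‖r n‖ + (1 + ρ) * δ ≤ qn * ‖r n‖ := by
      have h1 : 2 * ρ + (1 + ρ) / (‖r n‖ / δ) ≤ qn := by
        rw [hqndef]; exact le_max_right _ _
      have h2 : (2 * ρ + (1 + ρ) / (‖r n‖ / δ)) * ‖r n‖ = 2 * ρ * ‖r n‖ + (1 + ρ) * δ := by
        rw [div_div_eq_mul_div, add_mul, div_mul_cancel₀ _ (ne_of_gt hR0)]
      calc 2 * ρ * ‖r n‖ + (1 + ρ) * δ = (2 * ρ + (1 + ρ) / (‖r n‖ / δ)) * ‖r n‖ := h2.symm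
        _ ≤ qn * ‖r n‖ := mul_le_mul_of_nonneg_right h1 (le_of_lt hR0)
    have hqn_le : qn ≤ qb := by
      rw [hqndef, hqbdef]
      have hτle : τ ≤ ‖r n‖ / δ := (le_div_iff₀ hδ).mpr (le_of_lt hrn)
      have hdd : (1 + ρ) / (‖r n‖ / δ) ≤ (1 + ρ) / τ := by
        gcongr
      exact max_le_max le_rfl (by linarith)
    -- lower bound on ‖h‖
    have hHc : c ≤ ‖h‖ := by
      have h1 : ‖r n‖ ≤ specNorm (C * Cᵀ) * ‖h‖ + α * ‖h‖ := by
        calc ‖r n‖ = ‖mulVecE (C * Cᵀ) h + α • h‖ := by rw [hMh']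
          _ ≤ ‖mulVecE (C * Cᵀ) h‖ + ‖α • h‖ := norm_add_le _ _
          _ ≤ specNorm (C * Cᵀ) * ‖h‖ + α * ‖h‖ := by
              have := norm_mulVecE_le (C * Cᵀ) h
              have hsm : ‖α • h‖ = α * ‖h‖ := by
                rw [norm_smul, Real.norm_eq_abs, abs_of_pos hα]
              linarith
      rw [hαeq'] at h1
      have h2 : (1 - qb) * (τ * δ) ≤ B * ‖h‖ := by
        have hh0 : (0:ℝ) ≤ ‖h‖ := norm_nonneg _
        have k1 : (1 - qb) * (τ * δ) ≤ (1 - qn) * ‖r n‖ := by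
          apply mul_le_mul (by linarith) (le_of_lt hrn) (by positivity) (by linarith)
        have k2 : (1 - qn) * ‖r n‖ ≤ specNorm (C * Cᵀ) * ‖h‖ := by linarith [h1]
        have k3 : specNorm (C * Cᵀ) * ‖h‖ ≤ B * ‖h‖ := by
          apply mul_le_mul_of_nonneg_right _ hh0
          rw [hBdef]; linarith
        linarith
      rw [hcdef, div_le_iff₀ hBpos]
      linarith [h2]
    -- assemble
    have hαh2 : α * ‖h‖ ^ 2 = qn * ‖r n‖ * ‖h‖ := by
      rw [← hαeq']; ring
    have hfinal : 2 * inner ℝ (x - z n) u - ‖u‖ ^ 2 ≥ ε := by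
      have hh0 : (0:ℝ) ≤ ‖h‖ := norm_nonneg _
      have g1 : 2 * (inner ℝ (x - z n) u : ℝ) - ‖u‖ ^ 2 ≥
          inner ℝ (r n) h + α * ‖h‖ ^ 2 - 2 * (ρ * ‖r n‖ + (1 + 2 * ρ) * δ) * ‖h‖ := by
        rw [hun, hw2]
        linarith [hcross]
      have g2 : (inner ℝ (r n) h : ℝ) + α * ‖h‖ ^ 2 ≥ 2 * (qn * ‖r n‖) * ‖h‖ := by
        rw [hαh2] at hrh_ge ⊢
        linarith
      have g3 : 2 * (qn * ‖r n‖) * ‖h‖ - 2 * (ρ * ‖r n‖ + (1 + 2 * ρ) * δ) * ‖h‖ ≥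
          2 * ρ * (‖r n‖ - δ) * ‖h‖ := by
        linarith [mul_le_mul_of_nonneg_right hqn_ge hh0]
      have g4 : 2 * ρ * (‖r n‖ - δ) * ‖h‖ ≥ ε := by
        rw [hεdef]
        have hr1 : (τ - 1) * δ ≤ ‖r n‖ - δ := by
          have : τ * δ < ‖r n‖ := hrn
          linarith [this]
        have hr0 : (0:ℝ) ≤ (τ - 1) * δ := mul_nonneg (by linarith) (le_of_lt hδ)
        have hint := mul_le_mul hr1 hHc (le_of_lt hcpos)
          (by linarith : (0:ℝ) ≤ ‖r n‖ - δ)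
        have hint2 := mul_le_mul_of_nonneg_left hint (by linarith : (0:ℝ) ≤ 2 * ρ)
        linarith [hint2]
      linarith
    linarith [hexp, hfinal]
  -- conclude: squared error decreases by ε each step, contradiction
  have hdec : ∀ n : ℕ, ‖x - z n‖ ^ 2 ≤ ‖x - z 0‖ ^ 2 - n * ε := by
    intro n
    induction n with
    | zero => simp
    | succ k ih =>
        have := step k
        push_cast
        push_cast at ih
        linarith
  obtain ⟨n, hn⟩ := exists_nat_gt (‖x - z 0‖ ^ 2 / ε)
  have h1 : ‖x - z 0‖ ^ 2 < n * ε := by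
    rw [div_lt_iff₀ hεpos] at hn
    linarith
  have h2 := hdec n
  have h3 : (0:ℝ) ≤ ‖x - z n‖ ^ 2 := sq_nonneg _
  linarith
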